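/- Min-combination tightening inequality: for real sequences (η_l), (η̂_{i,l}) define η̃_l,j = min_{i=0,...,l−1} (η̂_{i,l} + η_{l−i}) where η̂_{i,l} = min_{w_1,...,w_i ∈ W_f} ( − h · Σ_{κ=1}^{i} a^{l−κ} b w_κ ) for scalars a, b, h and a compact set W_f ⊆ ℝ. Then for any w ∈ W_f: η̃_{l+1} + h a^{l} b w ≤ η̃_{l}, i.e., the tightened bounds are recursively compatible under one disturbance step. -/
import Mathlib

lemma etaHat_bddBelow (a b h : ℝ) (Wf : Set ℝ) (hWfc : IsCompact Wf) (i l : ℕ) :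
    BddBelow {x : ℝ | ∃ w : Fin i → ℝ, (∀ κ, w κ ∈ Wf) ∧
      x = -(∑ κ : Fin i, h * a ^ (l - (κ.1 + 1)) * b * w κ)} := by
  obtain ⟨M, hM⟩ := hWfc.isBounded.subset_closedBall 0
  refine ⟨-(∑ κ : Fin i, |h * a ^ (l - (κ.1 + 1)) * b| * M), ?_⟩
  rintro x ⟨w, hw, rfl⟩
  have hsum : ∑ κ : Fin i, h * a ^ (l - (κ.1 + 1)) * b * w κ ≤
      ∑ κ : Fin i, |h * a ^ (l - (κ.1 + 1)) * b| * M := by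
    apply Finset.sum_le_sum
    intro κ _
    calc h * a ^ (l - (κ.1 + 1)) * b * w κ
        ≤ |h * a ^ (l - (κ.1 + 1)) * b * w κ| := le_abs_self _
      _ = |h * a ^ (l - (κ.1 + 1)) * b| * |w κ| := abs_mul _ _
      _ ≤ |h * a ^ (l - (κ.1 + 1)) * b| * M := by
          apply mul_le_mul_of_nonneg_left _ (abs_nonneg _)
          have := hM (hw κ)
          simpa [Metric.mem_closedBall, Real.dist_eq] using this
  linarith


/-- `η̂_{i,l} = min over w_1,...,w_i ∈ W_f of  −h · Σ_{κ=1}^{i} a^{l−κ} b w_κ`. -/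
noncomputable def etaHat (a b h : ℝ) (Wf : Set ℝ) (i l : ℕ) : ℝ :=
  sInf {x : ℝ | ∃ w : Fin i → ℝ, (∀ κ, w κ ∈ Wf) ∧
    x = -(∑ κ : Fin i, h * a ^ (l - (κ.1 + 1)) * b * w κ)}

/-- `η̃_l = min_{i=0,…,l−1} (η̂_{i,l} + η_{l−i})`. -/
noncomputable def etaTilde (a b h : ℝ) (Wf : Set ℝ) (η : ℕ → ℝ) (l : ℕ) : ℝ :=
  sInf {x : ℝ | ∃ i < l, x = etaHat a b h Wf i l + η (l - i)}

theorem stmt_16 (a b h : ℝ) (Wf : Set ℝ) (hWfc : IsCompact Wf) (hWfne : Wf.Nonempty)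
    (η : ℕ → ℝ) (l : ℕ) (hl : 1 ≤ l) :
    ∀ w ∈ Wf,
      etaTilde a b h Wf η (l + 1) + h * a ^ l * b * w ≤ etaTilde a b h Wf η l := by
  intro w hw
  apply le_csInf
  · exact ⟨etaHat a b h Wf 0 l + η l, 0, by omega, by simp⟩
  rintro x ⟨i, hil, rfl⟩
  have h1 : etaTilde a b h Wf η (l + 1) ≤ etaHat a b h Wf (i + 1) (l + 1) + η (l - i) := by
    apply csInf_le
    · have hset : {x : ℝ | ∃ j < l + 1, x = etaHat a b h Wf j (l + 1) + η (l + 1 - j)} =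
          (fun j => etaHat a b h Wf j (l + 1) + η (l + 1 - j)) '' {j | j < l + 1} := by
        ext y; simp [eq_comm]
      rw [hset]
      exact ((Set.finite_Iio _).image _).bddBelow
    · refine ⟨i + 1, by omega, ?_⟩
      congr 2
      omega
  have h2 : etaHat a b h Wf (i + 1) (l + 1) + h * a ^ l * b * w ≤ etaHat a b h Wf i l := by
    apply le_csInf
    · obtain ⟨w0, hw0⟩ := hWfne
      exact ⟨_, fun _ => w0, fun _ => hw0, rfl⟩
    rintro x ⟨v, hv, rfl⟩
    have key : etaHat a b h Wf (i + 1) (l + 1) ≤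
        -(∑ κ : Fin i, h * a ^ (l - (κ.1 + 1)) * b * v κ) - h * a ^ l * b * w := by
      apply csInf_le (etaHat_bddBelow a b h Wf hWfc (i + 1) (l + 1))
      refine ⟨Fin.cons w v, ?_, ?_⟩
      · intro κ
        exact Fin.cases hw (fun j => hv j) κ
      · rw [Fin.sum_univ_succ]
        have e0 : (l + 1) - ((0 : Fin (i + 1)).1 + 1) = l := by simp
        have hrest : ∀ j : Fin i,
            h * a ^ ((l + 1) - ((Fin.succ j).1 + 1)) * b * ((Fin.cons w v : Fin (i+1) → ℝ) (Fin.succ j)) =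
            h * a ^ (l - (j.1 + 1)) * b * v j := by
          intro j
          have : (l + 1) - ((Fin.succ j).1 + 1) = l - (j.1 + 1) := by
            simp [Fin.val_succ]
          rw [this, Fin.cons_succ]
        rw [Finset.sum_congr rfl (fun j _ => hrest j), e0, Fin.cons_zero]
        ring
    linarith
  linarith
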